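/- Let g be a nonconstant holomorphic function on a neighborhood of 0 in ℂ with |g(0)| = 1. Then there exist a positive integer m and δ ∈ ℝ such that for every ε ∈ (0, π/(2m)) there exists r > 0 so that every z with 0 < |z| < r and |g(z)| = 1 lies in S(m, ε, δ). (Core of Lemma E2: if the singular set of a g-regular integral elliptic end accumulates at the end, then near the end it is contained in the union of 2m thin sectors.) -/

import Mathlib

open Complex Metric

noncomputable section

/-- `z` lies in the union `S(m,ε,δ)` of the `2m` open sectors
`{kπ/m + δ − ε < arg z < kπ/m + δ + ε}` (k ∈ ℤ, i.e. arg taken mod 2π). -/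
def inSectors (m : ℕ) (ε δ : ℝ) (z : ℂ) : Prop :=
  z ≠ 0 ∧ ∃ θ : ℝ, z = (‖z‖ : ℂ) * Complex.exp (θ * Complex.I) ∧
    ∃ k : ℤ, |θ - (k * Real.pi / m + δ)| < ε

/-- If `|sin y| < sin a` with `0 < a ≤ π/2`, then `y` is within `a` of a multiple of `π`. -/
lemma exists_int_near_of_abs_sin_lt {y a : ℝ} (ha : 0 < a) (ha' : a ≤ Real.pi / 2)
    (h : |Real.sin y| < Real.sin a) : ∃ k : ℤ, |y - k * Real.pi| < a := by
  have hpi := Real.pi_pos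
  refine ⟨round (y / Real.pi), ?_⟩
  set k : ℤ := round (y / Real.pi) with hk
  set u : ℝ := y - k * Real.pi with hu
  have hub : |u| ≤ Real.pi / 2 := by
    have h1 : |y / Real.pi - k| ≤ 1 / 2 := abs_sub_round _
    have h2 : u = (y / Real.pi - k) * Real.pi := by rw [hu]; field_simp
    rw [h2, abs_mul, abs_of_pos hpi]
    calc |y / Real.pi - (k : ℝ)| * Real.pi ≤ 1 / 2 * Real.pi :=
          mul_le_mul_of_nonneg_right h1 hpi.le
      _ = Real.pi / 2 := by ring
  have hsinu : |Real.sin u| = |Real.sin y| := by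
    rw [hu, Real.sin_sub_int_mul_pi]
    rcases Int.even_or_odd k with he | ho
    · rw [he.neg_one_zpow, one_mul]
    · rw [ho.neg_one_zpow, neg_one_mul, abs_neg]
  have hsin_abs : Real.sin |u| = |Real.sin u| := by
    rcases le_or_gt 0 u with h0 | h0
    · rw [_root_.abs_of_nonneg h0, _root_.abs_of_nonneg
        (Real.sin_nonneg_of_nonneg_of_le_pi h0 (by
          have := (le_abs_self u).trans hub; linarith))]
    · have hnu : 0 ≤ -u := by linarith
      have hle : -u ≤ Real.pi := by
        have := (neg_le_abs u).trans hub; linarith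
      have hs : 0 ≤ Real.sin (-u) := Real.sin_nonneg_of_nonneg_of_le_pi hnu hle
      rw [Real.sin_neg] at hs
      rw [abs_of_neg h0, Real.sin_neg, _root_.abs_of_nonpos (by linarith)]
  by_contra hcon
  push_neg at hcon
  have : Real.sin a ≤ Real.sin |u| :=
    Real.strictMonoOn_sin.monotoneOn ⟨by linarith, ha'⟩
      ⟨by linarith [abs_nonneg u], hub⟩ hcon
  rw [hsin_abs, hsinu] at this
  linarith

/-- If `|cos x| < sin a` with `0 < a ≤ π/2`, then `x` is within `a` of `π/2 + kπ`. -/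
lemma exists_int_near_of_abs_cos_lt {x a : ℝ} (ha : 0 < a) (ha' : a ≤ Real.pi / 2)
    (h : |Real.cos x| < Real.sin a) : ∃ k : ℤ, |x - (Real.pi / 2 + k * Real.pi)| < a := by
  have hsin : |Real.sin (x - Real.pi / 2)| = |Real.cos x| := by
    have h1 : Real.sin (x - Real.pi / 2) = -Real.cos x := by
      rw [← Real.sin_pi_div_two_sub x, ← Real.sin_neg]; ring_nf
    rw [h1, abs_neg]
  obtain ⟨k, hk⟩ := exists_int_near_of_abs_sin_lt ha ha' (by rw [hsin]; exact h)
  exact ⟨k, by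
    rw [show x - (Real.pi / 2 + k * Real.pi) = x - Real.pi / 2 - k * Real.pi by ring]
    exact hk⟩

/-- Polar form of the real part of `c * z ^ n`. -/
lemma re_mul_pow (c z : ℂ) (n : ℕ) :
    (c * z ^ n).re = ‖c‖ * ‖z‖ ^ n *
      Real.cos (Complex.arg c + n * Complex.arg z) := by
  conv_lhs => rw [← Complex.norm_mul_exp_arg_mul_I c, ← Complex.norm_mul_exp_arg_mul_I z]
  rw [mul_pow, ← Complex.exp_nat_mul,
    show (n : ℂ) * ((Complex.arg z : ℂ) * Complex.I)
      = ((n * Complex.arg z : ℝ) : ℂ) * Complex.I by push_cast; ring,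
    show (‖c‖ : ℂ) * Complex.exp ((Complex.arg c : ℂ) * Complex.I) *
        ((‖z‖ : ℂ) ^ n *
          Complex.exp (((n * Complex.arg z : ℝ) : ℂ) * Complex.I))
      = ((‖c‖ * ‖z‖ ^ n : ℝ) : ℂ) *
        (Complex.exp ((Complex.arg c : ℂ) * Complex.I) *
          Complex.exp (((n * Complex.arg z : ℝ) : ℂ) * Complex.I)) by push_cast; ring,
    ← Complex.exp_add,
    show (Complex.arg c : ℂ) * Complex.I + ((n * Complex.arg z : ℝ) : ℂ) * Complex.I
      = ((Complex.arg c + n * Complex.arg z : ℝ) : ℂ) * Complex.I by push_cast; ring,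
    Complex.re_ofReal_mul, Complex.exp_ofReal_mul_I_re]

/-- Core of Lemma E2: if `g` is a nonconstant holomorphic function near `0`
with `|g(0)| = 1`, then there are `m ∈ ℤ₊` and `δ ∈ ℝ` such that for every
`ε ∈ (0, π/(2m))` the set `{|g| = 1}` near `0` is contained in `S(m,ε,δ)`. -/
theorem integral_elliptic_singular_set_in_sectors
    (g : ℂ → ℂ) (hg : AnalyticAt ℂ g 0)
    (hnc : ¬ ∀ᶠ z in nhds (0 : ℂ), g z = g 0)
    (habs : ‖g 0‖ = 1) :
    ∃ (m : ℕ) (δ : ℝ), 0 < m ∧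
      ∀ ε : ℝ, 0 < ε → ε < Real.pi / (2 * m) →
        ∃ r : ℝ, 0 < r ∧ ∀ z : ℂ, 0 < ‖z‖ → ‖z‖ < r → ‖g z‖ = 1 →
          inSectors m ε δ z := by
  have hpi := Real.pi_pos
  -- factor g z - g 0 = z ^ n * h z with h 0 ≠ 0, n ≥ 1
  have hf : AnalyticAt ℂ (fun z => g z - g 0) 0 := hg.sub analyticAt_const
  have hfo : analyticOrderAt (fun z => g z - g 0) 0 ≠ ⊤ := by
    intro htop
    have hev := analyticOrderAt_eq_top.mp htop
    exact hnc (hev.mono fun z hz => by simpa [sub_eq_zero] using hz)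
  obtain ⟨n, hn⟩ := ENat.ne_top_iff_exists.mp hfo
  obtain ⟨h, hhan, hh0, hev0⟩ := hf.analyticOrderAt_eq_natCast.mp hn.symm
  have hev : ∀ᶠ z in nhds (0 : ℂ), g z = g 0 + z ^ n * h z := by
    filter_upwards [hev0] with z hz
    have hz' : g z - g 0 = z ^ n * h z := by simpa [smul_eq_mul] using hz
    linear_combination hz'
  have hnpos : 0 < n := by
    rcases Nat.eq_zero_or_pos n with h0 | h0
    · exfalso
      have h1 := hev.self_of_nhds
      simp only [h0, pow_zero, one_mul] at h1
      exact hh0 (by linear_combination -h1)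
    · exact h0
  have hg0 : g 0 ≠ 0 := fun h0 => by rw [h0] at habs; simp at habs
  set c : ℂ := (starRingEnd ℂ) (g 0) * h 0 with hc_def
  have hc : c ≠ 0 := mul_ne_zero (by simpa using hg0) hh0
  have hcabs : 0 < ‖c‖ := norm_pos_iff.mpr hc
  set φ : ℝ := Complex.arg c with hφ_def
  refine ⟨n, (Real.pi / 2 - φ) / n, hnpos, ?_⟩
  intro ε hε hε'
  set δ : ℝ := (Real.pi / 2 - φ) / n with hδ_def
  have hnR : (0 : ℝ) < n := Nat.cast_pos.mpr hnpos
  set a : ℝ := n * ε with ha_def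
  have ha : 0 < a := by positivity
  have ha' : a < Real.pi / 2 := by
    have h1 : (n : ℝ) * ε < (n : ℝ) * (Real.pi / (2 * n)) :=
      mul_lt_mul_of_pos_left hε' hnR
    calc a = (n : ℝ) * ε := rfl
      _ < (n : ℝ) * (Real.pi / (2 * n)) := h1
      _ = Real.pi / 2 := by field_simp
  have hsina : 0 < Real.sin a := Real.sin_pos_of_pos_of_lt_pi ha (by linarith)
  set A : ℝ := ‖c‖ * Real.sin a with hA_def
  have hA : 0 < A := by positivity
  -- eventual smallness of the error terms
  have hhc : ContinuousAt h 0 := hhan.continuousAt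
  have tend : Filter.Tendsto (fun z : ℂ => ‖h z - h 0‖ + ‖z‖ ^ n * ‖h z‖ ^ 2 / 2)
      (nhds 0) (nhds 0) := by
    have hcont : ContinuousAt (fun z : ℂ => ‖h z - h 0‖ + ‖z‖ ^ n * ‖h z‖ ^ 2 / 2) 0 := by
      apply ContinuousAt.add
      · exact (hhc.sub continuousAt_const).norm
      · exact ((continuous_norm.continuousAt.pow n).mul (hhc.norm.pow 2)).div_const 2
    have h0 : ‖h 0 - h 0‖ + ‖(0 : ℂ)‖ ^ n * ‖h 0‖ ^ 2 / 2 = 0 := by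
      simp [zero_pow hnpos.ne']
    simpa [ContinuousAt, h0, zero_pow hnpos.ne'] using hcont
  have hev2 : ∀ᶠ z in nhds (0 : ℂ), ‖h z - h 0‖ + ‖z‖ ^ n * ‖h z‖ ^ 2 / 2 < A :=
    tend.eventually_lt_const hA
  obtain ⟨r, hr, hball⟩ := Metric.eventually_nhds_iff.mp (hev.and hev2)
  refine ⟨r, hr, ?_⟩
  intro z hz0 hzr hz1
  obtain ⟨hgz, hbound⟩ := hball (by simpa [dist_zero_right] using hzr)
  have hzne : z ≠ 0 := by simpa [norm_pos_iff] using hz0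
  set R : ℝ := ‖z‖ with hR_def
  have hRnorm : ‖z‖ = R := rfl
  have hR : 0 < R := by rw [← hRnorm]; exact hz0
  set θ : ℝ := Complex.arg z with hθ_def
  set w : ℂ := z ^ n * h z with hw_def
  -- from ‖g z‖ = 1 deduce the bound on the real part
  have hsq : Complex.normSq (g 0 + w) = 1 := by
    rw [Complex.normSq_eq_norm_sq, ← hgz, hz1]; norm_num
  have hns : Complex.normSq (g 0) = 1 := by
    rw [Complex.normSq_eq_norm_sq, habs]; norm_num
  have hre : 2 * (g 0 * (starRingEnd ℂ) w).re = - Complex.normSq w := by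
    have h1 := Complex.normSq_add (g 0) w
    rw [hsq, hns] at h1; linarith
  have hre2 : ((starRingEnd ℂ) (g 0) * w).re = (g 0 * (starRingEnd ℂ) w).re := by
    rw [← Complex.conj_re (g 0 * (starRingEnd ℂ) w), map_mul, Complex.conj_conj]
  -- decompose
  have hdec : (c * z ^ n).re
      = ((starRingEnd ℂ) (g 0) * w).re - ((starRingEnd ℂ) (g 0) * z ^ n * (h z - h 0)).re := by
    have : c * z ^ n = (starRingEnd ℂ) (g 0) * w - (starRingEnd ℂ) (g 0) * z ^ n * (h z - h 0) := by
      rw [hc_def, hw_def]; ring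
    rw [this, Complex.sub_re]
  have hwnorm : Complex.normSq w = R ^ n * (R ^ n * ‖h z‖ ^ 2) := by
    rw [Complex.normSq_eq_norm_sq, hw_def, norm_mul, norm_pow]
    rw [hRnorm]
    ring
  have herr : ‖(starRingEnd ℂ) (g 0) * z ^ n * (h z - h 0)‖ = R ^ n * ‖h z - h 0‖ := by
    rw [norm_mul, norm_mul, norm_pow]
    simp [habs, hRnorm]
  have hkey : |(c * z ^ n).re| < R ^ n * A := by
    have h1 : |((starRingEnd ℂ) (g 0) * w).re| = Complex.normSq w / 2 := by
      rw [hre2, abs_of_nonpos (by nlinarith [Complex.normSq_nonneg w])]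
      linarith
    have h2 : |((starRingEnd ℂ) (g 0) * z ^ n * (h z - h 0)).re|
        ≤ R ^ n * ‖h z - h 0‖ := by
      rw [← herr]; exact Complex.abs_re_le_norm _
    have h3 : |(c * z ^ n).re| ≤ Complex.normSq w / 2 + R ^ n * ‖h z - h 0‖ := by
      rw [hdec]
      exact (abs_sub _ _).trans (by rw [h1]; linarith [h2])
    have h4 : Complex.normSq w / 2 + R ^ n * ‖h z - h 0‖
        = R ^ n * (‖h z - h 0‖ + R ^ n * ‖h z‖ ^ 2 / 2) := by
      rw [hwnorm]; ring
    have h5 : ‖h z - h 0‖ + R ^ n * ‖h z‖ ^ 2 / 2 < A := by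
      rw [← hRnorm]; exact hbound
    calc |(c * z ^ n).re| ≤ R ^ n * (‖h z - h 0‖ + R ^ n * ‖h z‖ ^ 2 / 2) := by
          rw [← h4]; exact h3
      _ < R ^ n * A := by
          exact mul_lt_mul_of_pos_left h5 (by positivity)
  -- polar form
  have hpolar : |(c * z ^ n).re| = ‖c‖ * R ^ n * |Real.cos (φ + n * θ)| := by
    rw [re_mul_pow, abs_mul, _root_.abs_of_nonneg (by positivity : (0:ℝ) ≤ ‖c‖ * ‖z‖ ^ n)]
  have hcos : |Real.cos (φ + n * θ)| < Real.sin a := by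
    rw [hpolar, hA_def] at hkey
    have hpos : 0 < R ^ n * ‖c‖ := by positivity
    have h2 : R ^ n * ‖c‖ * |Real.cos (φ + n * θ)|
        < R ^ n * ‖c‖ * Real.sin a := by
      calc R ^ n * ‖c‖ * |Real.cos (φ + n * θ)|
          = ‖c‖ * R ^ n * |Real.cos (φ + n * θ)| := by ring
        _ < R ^ n * (‖c‖ * Real.sin a) := hkey
        _ = R ^ n * ‖c‖ * Real.sin a := by ring
    exact (mul_lt_mul_iff_right₀ hpos).mp h2
  obtain ⟨k, hk⟩ := exists_int_near_of_abs_cos_lt ha ha'.le hcos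
  refine ⟨hzne, θ, ?_, k, ?_⟩
  · rw [hRnorm]
    exact (Complex.norm_mul_exp_arg_mul_I z).symm
  · have heq : (n : ℝ) * |θ - ((k : ℝ) * Real.pi / n + δ)|
        = |φ + n * θ - (Real.pi / 2 + k * Real.pi)| := by
      rw [← abs_of_pos hnR, ← abs_mul]
      congr 1
      rw [hδ_def]
      field_simp
      rw [abs_of_pos hnR]; ring
    have : (n : ℝ) * |θ - ((k : ℝ) * Real.pi / n + δ)| < (n : ℝ) * ε := by
      rw [heq]; exact hk
    exact lt_of_mul_lt_mul_left this hnR.le
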